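/- Let α > 0, let θ_1, …, θ_L be i.i.d. real random variables uniformly distributed on [−α, α], let X_1, …, X_L and, for each i in a finite index set I, Y_{i,1}, …, Y_{i,L} be square-integrable complex random variables such that the vector (θ_1, …, θ_L) is independent of the collection of all X_l and Y_{i,l}, and let σ² > 0. Then, with ν̃ = (sin(α)/α)², the hardening-bound SINR | Σ_l E[e^{iθ_l} X_l] |² / ( Σ_{i∈I} E[ |Σ_l e^{iθ_l} Y_{i,l}|² ] − | Σ_l E[e^{iθ_l} X_l] |² + σ² ) equals ν̃ · |Σ_l E[X_l]|² / ( Σ_{i∈I} ( ν̃ · E[|Σ_l Y_{i,l}|²] + (1−ν̃) · Σ_l E[|Y_{i,l}|²] ) − ν̃ · |Σ_l E[X_l]|² + σ² ), provided the common denominator is nonzero. -/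

import Mathlib

set_option linter.unusedSectionVars false
set_option linter.unusedVariables false
set_option linter.unusedTactic false
set_option maxHeartbeats 1000000

open scoped ComplexConjugate


open MeasureTheory Set ProbabilityTheory

/-- The uniform probability measure on the interval `[-a, a]`. -/
noncomputable def uniformIcc (a : ℝ) : Measure ℝ :=
  (volume (Icc (-a) a))⁻¹ • volume.restrict (Icc (-a) a)

namespace SINRAux

variable {Ω : Type*} [MeasurableSpace Ω] {μ : Measure Ω} [IsProbabilityMeasure μ]

lemma memℒp_conj {f : Ω → ℂ} (hf : MemLp f 2 μ) : MemLp (fun ω => conj (f ω)) 2 μ :=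
  MemLp.of_le hf (Complex.continuous_conj.comp_aestronglyMeasurable hf.1)
    (Filter.Eventually.of_forall fun ω => by simp)

lemma integrable_mul_l2 {f g : Ω → ℂ} (hf : MemLp f 2 μ) (hg : MemLp g 2 μ) :
    Integrable (fun ω => f ω * g ω) μ := by
  have h : MemLp (f • g) 1 μ := hg.smul (φ := f) hf
  exact memLp_one_iff_integrable.mp (by simpa [smul_eq_mul, Pi.mul_def] using h)

lemma integral_complex_re {f : Ω → ℂ} (hf : Integrable f μ) :
    ∫ ω, (f ω).re ∂μ = (∫ ω, f ω ∂μ).re := by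
  simpa using integral_re (𝕜 := ℂ) hf

lemma integral_complex_im {f : Ω → ℂ} (hf : Integrable f μ) :
    ∫ ω, (f ω).im ∂μ = (∫ ω, f ω ∂μ).im := by
  simpa using integral_im (𝕜 := ℂ) hf

lemma indep_integral_mul {f g : Ω → ℂ} (h : IndepFun f g μ)
    (hf : Integrable f μ) (hg : Integrable g μ) :
    ∫ ω, f ω * g ω ∂μ = (∫ ω, f ω ∂μ) * ∫ ω, g ω ∂μ := by
  have hrr := (h.comp Complex.measurable_re Complex.measurable_re).integral_mul_eq_mul_integral
    hf.re.1 hg.re.1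
  have hri := (h.comp Complex.measurable_re Complex.measurable_im).integral_mul_eq_mul_integral
    hf.re.1 hg.im.1
  have hir := (h.comp Complex.measurable_im Complex.measurable_re).integral_mul_eq_mul_integral
    hf.im.1 hg.re.1
  have hii := (h.comp Complex.measurable_im Complex.measurable_im).integral_mul_eq_mul_integral
    hf.im.1 hg.im.1
  have Irr := (h.comp Complex.measurable_re Complex.measurable_re).integrable_mul hf.re hg.re
  have Iri := (h.comp Complex.measurable_re Complex.measurable_im).integrable_mul hf.re hg.im
  have Iir := (h.comp Complex.measurable_im Complex.measurable_re).integrable_mul hf.im hg.re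
  have Iii := (h.comp Complex.measurable_im Complex.measurable_im).integrable_mul hf.im hg.im
  have hfg : Integrable (fun ω => f ω * g ω) μ := h.integrable_mul hf hg
  simp only [Pi.mul_def, Function.comp_def] at hrr hri hir hii Irr Iri Iir Iii
  apply Complex.ext
  · rw [← integral_complex_re hfg]
    simp only [Complex.mul_re]
    rw [integral_sub Irr Iii, hrr, hii, integral_complex_re hf, integral_complex_re hg,
      integral_complex_im hf, integral_complex_im hg]
  · rw [← integral_complex_im hfg]
    simp only [Complex.mul_im]
    rw [integral_add Iri Iir, hri, hir, integral_complex_re hf, integral_complex_re hg,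
      integral_complex_im hf, integral_complex_im hg]

lemma integral_exp_uniformIcc {α : ℝ} (hα : 0 < α) :
    ∫ t, Complex.exp ((t : ℂ) * Complex.I) ∂(uniformIcc α) = ((Real.sin α / α : ℝ) : ℂ) := by
  unfold uniformIcc
  rw [integral_smul_measure]
  have h1 : ∫ t in Icc (-α) α, Complex.exp ((t : ℂ) * Complex.I) = 2 * Real.sin α := by
    rw [integral_Icc_eq_integral_Ioc, ← intervalIntegral.integral_of_le (by linarith : -α ≤ α)]
    have h2 := integral_exp_mul_complex (a := -α) (b := α) (c := Complex.I) Complex.I_ne_zero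
    simp_rw [mul_comm Complex.I] at h2
    rw [h2]
    push_cast
    rw [Complex.exp_mul_I, Complex.exp_mul_I, Complex.cos_neg, Complex.sin_neg]
    rw [div_eq_iff Complex.I_ne_zero]
    push_cast
    ring
  rw [h1, Real.volume_Icc]
  have h3 : (ENNReal.ofReal (α - -α))⁻¹.toReal = (2 * α)⁻¹ := by
    rw [ENNReal.toReal_inv, ENNReal.toReal_ofReal (by linarith)]
    ring_nf
  rw [h3, Complex.real_smul]
  push_cast
  rw [inv_mul_eq_div, mul_div_mul_left _ _ (by norm_num : (2:ℂ) ≠ 0)]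

lemma norm_sq_eq_re_mul_conj (z : ℂ) : ‖z‖ ^ 2 = (z * conj z).re := by
  rw [Complex.mul_conj, Complex.ofReal_re, Complex.normSq_eq_norm_sq]

lemma integral_norm_sq {f : Ω → ℂ} (hf : MemLp f 2 μ) :
    ∫ ω, ‖f ω‖ ^ 2 ∂μ = (∫ ω, f ω * conj (f ω) ∂μ).re := by
  rw [← integral_complex_re (integrable_mul_l2 hf (memℒp_conj hf))]
  exact integral_congr_ae (Filter.Eventually.of_forall fun ω => norm_sq_eq_re_mul_conj _)

lemma integral_norm_sq_sum {L : ℕ} {a : Fin L → Ω → ℂ} (ha : ∀ l, MemLp (a l) 2 μ) :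
    ∫ ω, ‖∑ l, a l ω‖ ^ 2 ∂μ = ∑ l, ∑ m, (∫ ω, a l ω * conj (a m ω) ∂μ).re := by
  have hint : ∀ l m : Fin L, Integrable (fun ω => a l ω * conj (a m ω)) μ :=
    fun l m => integrable_mul_l2 (ha l) (memℒp_conj (ha m))
  have hpt : ∀ ω, ‖∑ l, a l ω‖ ^ 2 = ∑ l, ∑ m, (a l ω * conj (a m ω)).re := by
    intro ω
    rw [norm_sq_eq_re_mul_conj, map_sum, Finset.sum_mul_sum]
    rw [Complex.re_sum]
    exact Finset.sum_congr rfl fun l _ => by rw [Complex.re_sum]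
  simp_rw [hpt]
  rw [integral_finset_sum (f := fun l ω => ∑ m, (a l ω * conj (a m ω)).re) _
    (fun l _ => integrable_finset_sum (f := fun m ω => (a l ω * conj (a m ω)).re) _
      (fun m _ => (hint l m).re))]
  refine Finset.sum_congr rfl fun l _ => ?_
  rw [integral_finset_sum (f := fun m ω => (a l ω * conj (a m ω)).re) _
    (fun m _ => (hint l m).re)]
  exact Finset.sum_congr rfl fun m _ => integral_complex_re (hint l m)

end SINRAux

/-- Reformulation of the hardening-bound SINR (Eqs. (19)–(20) of the paper): with i.i.d.
phases `θ_l ~ U[-α, α]` independent of all effective channel coefficients `X_l`,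
`Y_{i,l}`, and with `ν̃ = (sin α / α)²`,
`|Σ_l E[e^{iθ_l} X_l]|² / (Σ_i E[|Σ_l e^{iθ_l} Y_{i,l}|²] - |Σ_l E[e^{iθ_l} X_l]|² + σ²)`
equals
`ν̃ |Σ_l E[X_l]|² / (Σ_i (ν̃ E[|Σ_l Y_{i,l}|²] + (1-ν̃) Σ_l E[|Y_{i,l}|²]) - ν̃ |Σ_l E[X_l]|² + σ²)`,
provided the denominators are nonzero. -/
theorem hardening_bound_sinr_reformulation
    {Ω : Type*} [MeasurableSpace Ω] (μ : Measure Ω) [IsProbabilityMeasure μ]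
    (α : ℝ) (hα : 0 < α) (L : ℕ) (θ : Fin L → Ω → ℝ)
    (hθ : ∀ l, AEMeasurable (θ l) μ)
    (hindep : iIndepFun θ μ)
    (hmap : ∀ l, μ.map (θ l) = uniformIcc α)
    {ι : Type*} [Fintype ι]
    (X : Fin L → Ω → ℂ) (Y : ι → Fin L → Ω → ℂ)
    (hX : ∀ l, MemLp (X l) 2 μ) (hY : ∀ i l, MemLp (Y i l) 2 μ)
    (hindepXY : IndepFun (fun ω l => θ l ω)
      (fun ω => ((fun l => X l ω), (fun i l => Y i l ω))) μ)
    (σ2 : ℝ) (hσ2 : 0 < σ2)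
    (hden₁ : (∑ i, ∫ ω, ‖∑ l, Complex.exp ((θ l ω : ℂ) * Complex.I) * Y i l ω‖ ^ 2 ∂μ)
        - ‖∑ l, ∫ ω, Complex.exp ((θ l ω : ℂ) * Complex.I) * X l ω ∂μ‖ ^ 2 + σ2 ≠ 0)
    (hden₂ : (∑ i, ((Real.sin α / α) ^ 2 * ∫ ω, ‖∑ l, Y i l ω‖ ^ 2 ∂μ
            + (1 - (Real.sin α / α) ^ 2) * ∑ l, ∫ ω, ‖Y i l ω‖ ^ 2 ∂μ))
        - (Real.sin α / α) ^ 2 * ‖∑ l, ∫ ω, X l ω ∂μ‖ ^ 2 + σ2 ≠ 0) :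
    ‖∑ l, ∫ ω, Complex.exp ((θ l ω : ℂ) * Complex.I) * X l ω ∂μ‖ ^ 2
        / ((∑ i, ∫ ω, ‖∑ l, Complex.exp ((θ l ω : ℂ) * Complex.I) * Y i l ω‖ ^ 2 ∂μ)
          - ‖∑ l, ∫ ω, Complex.exp ((θ l ω : ℂ) * Complex.I) * X l ω ∂μ‖ ^ 2 + σ2)
      = (Real.sin α / α) ^ 2 * ‖∑ l, ∫ ω, X l ω ∂μ‖ ^ 2
        / ((∑ i, ((Real.sin α / α) ^ 2 * ∫ ω, ‖∑ l, Y i l ω‖ ^ 2 ∂μ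
              + (1 - (Real.sin α / α) ^ 2) * ∑ l, ∫ ω, ‖Y i l ω‖ ^ 2 ∂μ))
          - (Real.sin α / α) ^ 2 * ‖∑ l, ∫ ω, X l ω ∂μ‖ ^ 2 + σ2) := by
  classical
  set ν : ℝ := Real.sin α / α with hν
  -- basic facts about the phase factors
  have hmeas_exp : Measurable (fun t : ℝ => Complex.exp ((t : ℂ) * Complex.I)) :=
    Complex.measurable_exp.comp (Complex.measurable_ofReal.mul_const _)
  have easm : ∀ l, AEStronglyMeasurable (fun ω => Complex.exp ((θ l ω : ℂ) * Complex.I)) μ :=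
    fun l => (hmeas_exp.comp_aemeasurable (hθ l)).aestronglyMeasurable
  have enorm : ∀ l (ω : Ω), ‖Complex.exp ((θ l ω : ℂ) * Complex.I)‖ = 1 :=
    fun l ω => Complex.norm_exp_ofReal_mul_I _
  have eint : ∀ l, Integrable (fun ω => Complex.exp ((θ l ω : ℂ) * Complex.I)) μ :=
    fun l => (integrable_const (1 : ℝ)).mono' (easm l)
      (Filter.Eventually.of_forall fun ω => by rw [enorm])
  have ememtop : ∀ l, MemLp (fun ω => Complex.exp ((θ l ω : ℂ) * Complex.I)) ⊤ μ :=
    fun l => memLp_top_of_bound (easm l) 1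
      (Filter.Eventually.of_forall fun ω => le_of_eq (enorm l ω))
  have eY : ∀ i l, MemLp (fun ω => Complex.exp ((θ l ω : ℂ) * Complex.I) * Y i l ω) 2 μ :=
    fun i l => by simpa [smul_eq_mul, Pi.mul_def] using (hY i l).smul (ememtop l)
  -- the mean of each phase factor
  have Eexp : ∀ l, ∫ ω, Complex.exp ((θ l ω : ℂ) * Complex.I) ∂μ = ((ν : ℝ) : ℂ) := by
    intro l
    have hg : AEStronglyMeasurable (fun t : ℝ => Complex.exp ((t : ℂ) * Complex.I))
        (μ.map (θ l)) := hmeas_exp.aestronglyMeasurable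
    rw [← integral_map (hθ l) hg, hmap l, SINRAux.integral_exp_uniformIcc hα]
  have Econj : ∀ l, ∫ ω, conj (Complex.exp ((θ l ω : ℂ) * Complex.I)) ∂μ = ((ν : ℝ) : ℂ) :=
    fun l => by rw [integral_conj, Eexp l, Complex.conj_ofReal]
  -- numerator
  have hXind : ∀ l, IndepFun (fun ω => Complex.exp ((θ l ω : ℂ) * Complex.I)) (X l) μ := by
    intro l
    exact hindepXY.comp (φ := fun v : Fin L → ℝ => Complex.exp ((v l : ℂ) * Complex.I))
      (ψ := fun p : (Fin L → ℂ) × (ι → Fin L → ℂ) => p.1 l)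
      (hmeas_exp.comp (measurable_pi_apply l))
      ((measurable_pi_apply l).comp measurable_fst)
  have hnum_term : ∀ l, ∫ ω, Complex.exp ((θ l ω : ℂ) * Complex.I) * X l ω ∂μ
      = ((ν : ℝ) : ℂ) * ∫ ω, X l ω ∂μ := fun l => by
    rw [SINRAux.indep_integral_mul (hXind l) (eint l) ((hX l).integrable one_le_two), Eexp l]
  have hnum : ‖∑ l, ∫ ω, Complex.exp ((θ l ω : ℂ) * Complex.I) * X l ω ∂μ‖ ^ 2
      = ν ^ 2 * ‖∑ l, ∫ ω, X l ω ∂μ‖ ^ 2 := by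
    simp_rw [hnum_term]
    rw [← Finset.mul_sum, norm_mul, mul_pow, Complex.norm_real, Real.norm_eq_abs, sq_abs]
  -- cross moments of phase factors
  have hW : ∀ l m : Fin L, ∫ ω, Complex.exp ((θ l ω : ℂ) * Complex.I)
      * conj (Complex.exp ((θ m ω : ℂ) * Complex.I)) ∂μ
      = if l = m then 1 else ((ν ^ 2 : ℝ) : ℂ) := by
    intro l m
    by_cases h : l = m
    · subst h
      rw [if_pos rfl]
      have hone : ∀ ω : Ω, Complex.exp ((θ l ω : ℂ) * Complex.I)
          * conj (Complex.exp ((θ l ω : ℂ) * Complex.I)) = 1 := by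
        intro ω
        rw [Complex.mul_conj, Complex.normSq_eq_norm_sq, enorm]
        norm_num
      simp_rw [hone]
      simp
    · rw [if_neg h]
      have hind : IndepFun (fun ω => Complex.exp ((θ l ω : ℂ) * Complex.I))
          (fun ω => conj (Complex.exp ((θ m ω : ℂ) * Complex.I))) μ :=
        (hindep.indepFun h).comp hmeas_exp
          (Complex.continuous_conj.measurable.comp hmeas_exp)
      have hintc : Integrable (fun ω => conj (Complex.exp ((θ m ω : ℂ) * Complex.I))) μ :=
        (integrable_const (1 : ℝ)).mono'
          (Complex.continuous_conj.comp_aestronglyMeasurable (easm m))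
          (Filter.Eventually.of_forall fun ω => by rw [RCLike.norm_conj, enorm])
      rw [SINRAux.indep_integral_mul hind (eint l) hintc, Eexp l, Econj m]
      push_cast
      ring
  -- key factorization for the interference terms
  have key : ∀ (i : ι) (l m : Fin L),
      ∫ ω, (Complex.exp ((θ l ω : ℂ) * Complex.I) * Y i l ω)
        * conj (Complex.exp ((θ m ω : ℂ) * Complex.I) * Y i m ω) ∂μ
      = (if l = m then 1 else ((ν ^ 2 : ℝ) : ℂ)) * ∫ ω, Y i l ω * conj (Y i m ω) ∂μ := by
    intro i l m
    have hrw : ∀ ω : Ω, (Complex.exp ((θ l ω : ℂ) * Complex.I) * Y i l ω)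
        * conj (Complex.exp ((θ m ω : ℂ) * Complex.I) * Y i m ω)
        = (Complex.exp ((θ l ω : ℂ) * Complex.I) * conj (Complex.exp ((θ m ω : ℂ) * Complex.I)))
          * (Y i l ω * conj (Y i m ω)) := fun ω => by rw [map_mul]; ring
    simp_rw [hrw]
    have hindWZ : IndepFun
        (fun ω => Complex.exp ((θ l ω : ℂ) * Complex.I)
          * conj (Complex.exp ((θ m ω : ℂ) * Complex.I)))
        (fun ω => Y i l ω * conj (Y i m ω)) μ := by
      exact hindepXY.comp
        (φ := fun v : Fin L → ℝ => Complex.exp ((v l : ℂ) * Complex.I)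
          * conj (Complex.exp ((v m : ℂ) * Complex.I)))
        (ψ := fun p : (Fin L → ℂ) × (ι → Fin L → ℂ) => p.2 i l * conj (p.2 i m))
        ((hmeas_exp.comp (measurable_pi_apply l)).mul
          (Complex.continuous_conj.measurable.comp (hmeas_exp.comp (measurable_pi_apply m))))
        (Measurable.mul (f := fun p : (Fin L → ℂ) × (ι → Fin L → ℂ) => p.2 i l)
          (g := fun p : (Fin L → ℂ) × (ι → Fin L → ℂ) => conj (p.2 i m))
          ((measurable_pi_apply l).comp ((measurable_pi_apply i).comp measurable_snd))
          (Complex.continuous_conj.measurable.comp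
            ((measurable_pi_apply m).comp ((measurable_pi_apply i).comp measurable_snd))))
    have hintW : Integrable (fun ω => Complex.exp ((θ l ω : ℂ) * Complex.I)
        * conj (Complex.exp ((θ m ω : ℂ) * Complex.I))) μ :=
      (integrable_const (1 : ℝ)).mono'
        ((easm l).mul (Complex.continuous_conj.comp_aestronglyMeasurable (easm m)))
        (Filter.Eventually.of_forall fun ω => by
          rw [norm_mul, enorm, RCLike.norm_conj, enorm]; norm_num)
    rw [SINRAux.indep_integral_mul hindWZ hintW
      (SINRAux.integrable_mul_l2 (hY i l) (SINRAux.memℒp_conj (hY i m))), hW l m]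
  -- per-interferer identity
  have hYexp : ∀ i : ι, ∫ ω, ‖∑ l, Complex.exp ((θ l ω : ℂ) * Complex.I) * Y i l ω‖ ^ 2 ∂μ
      = ν ^ 2 * ∫ ω, ‖∑ l, Y i l ω‖ ^ 2 ∂μ
        + (1 - ν ^ 2) * ∑ l, ∫ ω, ‖Y i l ω‖ ^ 2 ∂μ := by
    intro i
    rw [SINRAux.integral_norm_sq_sum (fun l => eY i l),
      SINRAux.integral_norm_sq_sum (fun l => hY i l)]
    simp_rw [key i, fun l => SINRAux.integral_norm_sq (hY i l)]
    rw [Finset.mul_sum, Finset.mul_sum, ← Finset.sum_add_distrib]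
    refine Finset.sum_congr rfl fun l _ => ?_
    rw [Finset.mul_sum]
    have hd : (1 - ν ^ 2) * (∫ ω, Y i l ω * conj (Y i l ω) ∂μ).re
        = ∑ m, if m = l then (1 - ν ^ 2) * (∫ ω, Y i l ω * conj (Y i m ω) ∂μ).re else 0 := by
      rw [Finset.sum_ite_eq' Finset.univ l
        (fun m => (1 - ν ^ 2) * (∫ ω, Y i l ω * conj (Y i m ω) ∂μ).re)]
      simp
    rw [hd, ← Finset.sum_add_distrib]
    refine Finset.sum_congr rfl fun m _ => ?_
    by_cases h : l = m
    · subst h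
      rw [if_pos rfl, if_pos rfl, one_mul]
      ring
    · rw [if_neg h, if_neg (Ne.symm h), Complex.re_ofReal_mul, add_zero]
  have hden : (∑ i, ∫ ω, ‖∑ l, Complex.exp ((θ l ω : ℂ) * Complex.I) * Y i l ω‖ ^ 2 ∂μ)
      = ∑ i, (ν ^ 2 * ∫ ω, ‖∑ l, Y i l ω‖ ^ 2 ∂μ
        + (1 - ν ^ 2) * ∑ l, ∫ ω, ‖Y i l ω‖ ^ 2 ∂μ) :=
    Finset.sum_congr rfl fun i _ => hYexp i
  rw [hnum, hden]
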